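/- Let A be a nonzero positive bounded operator on a complex Hilbert space H. Then for all x, y ∈ H, |⟨x,y⟩| + (1/‖A‖)(√(⟨Ax,x⟩⟨Ay,y⟩) − |⟨Ax,y⟩|) ≤ ‖x‖‖y‖. -/

import Mathlib

open scoped InnerProductSpace

lemma pos_cs {H : Type*} [NormedAddCommGroup H] [InnerProductSpace ℂ H] [CompleteSpace H]
    (T : H →L[ℂ] H) (hT : T.IsPositive) (x y : H) :
    ‖⟪T x, y⟫_ℂ‖ ^ 2 ≤ (⟪T x, x⟫_ℂ).re * (⟪T y, y⟫_ℂ).re := by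
  have hsym := hT.1
  have hsym' : ∀ u v : H, ⟪T u, v⟫_ℂ = ⟪u, T v⟫_ℂ := fun u v => hsym u v
  let c : PreInnerProductSpace.Core ℂ H :=
    { inner := fun u v => ⟪T u, v⟫_ℂ
      conj_inner_symm := fun u v => by
        show (starRingEnd ℂ) ⟪T v, u⟫_ℂ = ⟪T u, v⟫_ℂ
        rw [hsym' v u, inner_conj_symm, hsym']
      re_inner_nonneg := fun u => hT.2 u
      add_left := fun u v w => by simp [inner_add_left]
      smul_left := fun u v r => by simp [inner_smul_left, mul_comm] }
  have h := @InnerProductSpace.Core.inner_mul_inner_self_le ℂ H _ _ _ c x y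
  have h2 : ‖⟪T x, y⟫_ℂ‖ * ‖⟪T y, x⟫_ℂ‖ ≤ (⟪T x, x⟫_ℂ).re * (⟪T y, y⟫_ℂ).re := h
  have h3 : ‖⟪T y, x⟫_ℂ‖ = ‖⟪T x, y⟫_ℂ‖ := by
    rw [hsym' y x, ← norm_inner_symm, hsym']
  rw [h3, ← sq] at h2
  exact h2

theorem positive_cauchy_schwarz_refinement {H : Type*} [NormedAddCommGroup H]
    [InnerProductSpace ℂ H] [CompleteSpace H] (A : H →L[ℂ] H)
    (hA : A.IsPositive) (hA0 : A ≠ 0) (x y : H) :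
    ‖⟪x, y⟫_ℂ‖ +
      (1 / ‖A‖) * (Real.sqrt ((⟪A x, x⟫_ℂ).re * (⟪A y, y⟫_ℂ).re) - ‖⟪A x, y⟫_ℂ‖) ≤
      ‖x‖ * ‖y‖ := by
  have hN : (0:ℝ) < ‖A‖ := norm_pos_iff.mpr hA0
  have hAsym := hA.1
  set B : H →L[ℂ] H := ((‖A‖ : ℂ)) • (1 : H →L[ℂ] H) - A with hBdef
  have hBapply : ∀ u : H, B u = (‖A‖ : ℂ) • u - A u := by
    intro u; simp [hBdef]
  have hBinner : ∀ u v : H, ⟪B u, v⟫_ℂ = (‖A‖ : ℂ) * ⟪u, v⟫_ℂ - ⟪A u, v⟫_ℂ := by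
    intro u v
    rw [hBapply, inner_sub_left, inner_smul_left, Complex.conj_ofReal]
  have hBinner' : ∀ u v : H, ⟪u, B v⟫_ℂ = (‖A‖ : ℂ) * ⟪u, v⟫_ℂ - ⟪u, A v⟫_ℂ := by
    intro u v
    rw [hBapply, inner_sub_right, inner_smul_right]
  have hAselfinner : ∀ u : H, (⟪A u, u⟫_ℂ).re ≤ ‖A‖ * ‖u‖ ^ 2 := by
    intro u
    calc (⟪A u, u⟫_ℂ).re ≤ ‖⟪A u, u⟫_ℂ‖ := Complex.re_le_norm _
      _ = ‖⟪A u, u⟫_ℂ‖ := rfl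
      _ ≤ ‖A u‖ * ‖u‖ := norm_inner_le_norm _ _
      _ ≤ ‖A‖ * ‖u‖ * ‖u‖ := mul_le_mul_of_nonneg_right (A.le_opNorm u) (norm_nonneg u)
      _ = ‖A‖ * ‖u‖ ^ 2 := by ring
  have hBre : ∀ u : H, (⟪B u, u⟫_ℂ).re = ‖A‖ * ‖u‖ ^ 2 - (⟪A u, u⟫_ℂ).re := by
    intro u
    have hself : ⟪u, u⟫_ℂ = ((‖u‖ ^ 2 : ℝ) : ℂ) := by
      rw [inner_self_eq_norm_sq_to_K]; norm_cast
    rw [hBinner, hself, ← Complex.ofReal_mul, Complex.sub_re, Complex.ofReal_re]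
  have hB : B.IsPositive := by
    constructor
    · refine fun u v => ?_
      show ⟪B u, v⟫_ℂ = ⟪u, B v⟫_ℂ
      rw [hBinner, hBinner']
      have := hAsym u v
      simp only [ContinuousLinearMap.coe_coe] at this
      rw [this]
    · intro u
      show (0:ℝ) ≤ (⟪B u, u⟫_ℂ).re
      rw [hBre]
      linarith [hAselfinner u]
  set a := (⟪A x, x⟫_ℂ).re with ha
  set a' := (⟪A y, y⟫_ℂ).re with ha'
  have ha0 : 0 ≤ a := hA.2 x
  have ha'0 : 0 ≤ a' := hA.2 y
  set b := (⟪B x, x⟫_ℂ).re with hb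
  set b' := (⟪B y, y⟫_ℂ).re with hb'
  have hb0 : 0 ≤ b := hB.2 x
  have hb'0 : 0 ≤ b' := hB.2 y
  have hbx : b = ‖A‖ * ‖x‖ ^ 2 - a := hBre x
  have hby : b' = ‖A‖ * ‖y‖ ^ 2 - a' := hBre y
  have hcsA : ‖⟪A x, y⟫_ℂ‖ ^ 2 ≤ a * a' := pos_cs A hA x y
  have hcsB : ‖⟪B x, y⟫_ℂ‖ ^ 2 ≤ b * b' := pos_cs B hB x y
  have htri : ‖A‖ * ‖⟪x, y⟫_ℂ‖ ≤ ‖⟪B x, y⟫_ℂ‖ + ‖⟪A x, y⟫_ℂ‖ := by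
    have hsum : (‖A‖ : ℂ) * ⟪x, y⟫_ℂ = ⟪B x, y⟫_ℂ + ⟪A x, y⟫_ℂ := by
      rw [hBinner]; ring
    calc ‖A‖ * ‖⟪x, y⟫_ℂ‖ = ‖(‖A‖ : ℂ) * ⟪x, y⟫_ℂ‖ := by
          rw [norm_mul, Complex.norm_real, Real.norm_of_nonneg hN.le]
      _ = ‖⟪B x, y⟫_ℂ + ⟪A x, y⟫_ℂ‖ := by rw [hsum]
      _ ≤ ‖⟪B x, y⟫_ℂ‖ + ‖⟪A x, y⟫_ℂ‖ := norm_add_le _ _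
  have hsB : ‖⟪B x, y⟫_ℂ‖ ≤ Real.sqrt b * Real.sqrt b' := by
    have h0 : ‖⟪B x, y⟫_ℂ‖ = Real.sqrt (‖⟪B x, y⟫_ℂ‖ ^ 2) :=
      (Real.sqrt_sq (norm_nonneg _)).symm
    rw [h0, ← Real.sqrt_mul hb0]
    exact Real.sqrt_le_sqrt hcsB
  have hsA : Real.sqrt (a * a') = Real.sqrt a * Real.sqrt a' := Real.sqrt_mul ha0 _
  have h2d : Real.sqrt b * Real.sqrt b' + Real.sqrt a * Real.sqrt a' ≤ ‖A‖ * (‖x‖ * ‖y‖) := by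
    have h1 : (Real.sqrt b * Real.sqrt b' + Real.sqrt a * Real.sqrt a') ^ 2
        ≤ (a + b) * (a' + b') := by
      nlinarith [sq_nonneg (Real.sqrt a * Real.sqrt b' - Real.sqrt a' * Real.sqrt b),
        Real.sq_sqrt ha0, Real.sq_sqrt ha'0, Real.sq_sqrt hb0, Real.sq_sqrt hb'0,
        mul_nonneg (Real.sqrt_nonneg a) (Real.sqrt_nonneg a'),
        mul_nonneg (Real.sqrt_nonneg b) (Real.sqrt_nonneg b')]
    have h2 : (a + b) * (a' + b') = (‖A‖ * (‖x‖ * ‖y‖)) ^ 2 := by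
      rw [hbx, hby]; ring
    have h3 : 0 ≤ ‖A‖ * (‖x‖ * ‖y‖) := by positivity
    have h4 : 0 ≤ Real.sqrt b * Real.sqrt b' + Real.sqrt a * Real.sqrt a' := by positivity
    have h5 := Real.sqrt_le_sqrt (h1.trans_eq h2)
    rwa [Real.sqrt_sq h4, Real.sqrt_sq h3] at h5
  have key : ‖A‖ * ‖⟪x, y⟫_ℂ‖ + (Real.sqrt (a * a') - ‖⟪A x, y⟫_ℂ‖) ≤ ‖A‖ * (‖x‖ * ‖y‖) := by
    rw [hsA]
    linarith [htri, hsB, h2d]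
  have hdiv : (1 / ‖A‖) * (Real.sqrt (a * a') - ‖⟪A x, y⟫_ℂ‖)
      ≤ ‖x‖ * ‖y‖ - ‖⟪x, y⟫_ℂ‖ := by
    rw [div_mul_eq_mul_div, one_mul, div_le_iff₀ hN]
    have hexp : (‖x‖ * ‖y‖ - ‖⟪x, y⟫_ℂ‖) * ‖A‖ = ‖A‖ * (‖x‖ * ‖y‖) - ‖A‖ * ‖⟪x, y⟫_ℂ‖ := by
      ring
    rw [hexp]
    linarith [key]
  linarith [hdiv]
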